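/- Let f ∈ ℝ[x₁,…,xₙ] and let h, g be tuples of polynomials with feasible set K. Suppose f_min = inf_{x∈K} f(x) is finite, Lasserre's hierarchy has finite convergence (f_k = f_min for all sufficiently large k), and ⟨h⟩ = I(K). Then the SOS relaxation achieves its optimum for all sufficiently large orders: there exists N such that for all k ≥ N, f − f_min ∈ ⟨h⟩_{2k} + Q_k(g). -/

import Mathlib

open MvPolynomial Pointwise

/-- A polynomial is a sum of squares. -/
def IsSOS {n : ℕ} (p : MvPolynomial (Fin n) ℝ) : Prop :=
  ∃ (m : ℕ) (q : Fin m → MvPolynomial (Fin n) ℝ), p = ∑ i, q i ^ 2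

/-- The `2k`-th truncated ideal generated by the tuple `h`. -/
def truncIdeal {n m : ℕ} (h : Fin m → MvPolynomial (Fin n) ℝ) (k : ℕ) :
    Set (MvPolynomial (Fin n) ℝ) :=
  {p | ∃ φ : Fin m → MvPolynomial (Fin n) ℝ,
    (∀ i, (φ i * h i).totalDegree ≤ 2 * k) ∧ p = ∑ i, φ i * h i}

/-- The `k`-th truncated quadratic module generated by the tuple `g` (with `g₀ = 1`). -/
def truncQM {n m : ℕ} (g : Fin m → MvPolynomial (Fin n) ℝ) (k : ℕ) :
    Set (MvPolynomial (Fin n) ℝ) :=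
  {p | ∃ σ : Fin (m + 1) → MvPolynomial (Fin n) ℝ,
    (∀ j, IsSOS (σ j) ∧
      (σ j * (Fin.cons 1 g : Fin (m + 1) → MvPolynomial (Fin n) ℝ) j).totalDegree ≤ 2 * k) ∧
    p = ∑ j, σ j * (Fin.cons 1 g : Fin (m + 1) → MvPolynomial (Fin n) ℝ) j}

/-- The feasible set `K` of the problem `h = 0, g ≥ 0`. -/
def feasSet {n m₁ m₂ : ℕ} (h : Fin m₁ → MvPolynomial (Fin n) ℝ)
    (g : Fin m₂ → MvPolynomial (Fin n) ℝ) : Set (Fin n → ℝ) :=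
  {x | (∀ i, eval x (h i) = 0) ∧ ∀ j, 0 ≤ eval x (g j)}

/-- The real variety `V_ℝ(h)`. -/
def realVariety {n m : ℕ} (h : Fin m → MvPolynomial (Fin n) ℝ) : Set (Fin n → ℝ) :=
  {x | ∀ i, eval x (h i) = 0}

/-- The vanishing ideal `I(S)` of a set `S ⊆ ℝⁿ`. -/
def vanishIdeal {n : ℕ} (S : Set (Fin n → ℝ)) : Set (MvPolynomial (Fin n) ℝ) :=
  {p | ∀ u ∈ S, eval u p = 0}

/-- The `k`-th Lasserre bound `f_k` (an extended real). -/
noncomputable def lasserreBound {n m₁ m₂ : ℕ} (f : MvPolynomial (Fin n) ℝ)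
    (h : Fin m₁ → MvPolynomial (Fin n) ℝ) (g : Fin m₂ → MvPolynomial (Fin n) ℝ)
    (k : ℕ) : EReal :=
  sSup {γ : EReal | ∃ r : ℝ, γ = (r : EReal) ∧ f - C r ∈ truncIdeal h k + truncQM g k}

/-- `f_min`, the infimum of `f` over `K`, as an extended real (`⊤` if `K = ∅`). -/
noncomputable def fMin {n : ℕ} (f : MvPolynomial (Fin n) ℝ) (K : Set (Fin n → ℝ)) : EReal :=
  ⨅ x ∈ K, (eval x f : EReal)


namespace SosAux

variable {n : ℕ}

abbrev Poly (n : ℕ) := MvPolynomial (Fin n) ℝ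

lemma degree_sum_eq (d : Fin n →₀ ℕ) : (d.sum fun _ e => e) = d.degree := rfl

lemma exists_max_degree {p : Poly n} (hp : p ≠ 0) :
    ∃ d, d.degree = p.totalDegree ∧ coeff d p ≠ 0 := by
  have hne : p.support.Nonempty := support_nonempty.mpr hp
  obtain ⟨d, hd, hsup⟩ := Finset.exists_mem_eq_sup p.support hne (fun d => d.degree)
  refine ⟨d, ?_, mem_support_iff.mp hd⟩
  rw [totalDegree]
  simp only [degree_sum_eq]
  exact hsup.symm

lemma hc_top_ne_zero {p : Poly n} (hp : p ≠ 0) :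
    homogeneousComponent p.totalDegree p ≠ 0 := by
  obtain ⟨d, hdeg, hc⟩ := exists_max_degree hp
  intro h0
  have := coeff_homogeneousComponent (σ := Fin n) p.totalDegree p d
  rw [h0, if_pos hdeg] at this
  simp at this
  exact hc this.symm

lemma le_totalDegree_of_hc_ne_zero {p : Poly n} {k : ℕ}
    (h : homogeneousComponent k p ≠ 0) : k ≤ p.totalDegree := by
  by_contra h'
  push_neg at h'
  exact h (homogeneousComponent_eq_zero _ _ h')

lemma degree_add (u v : Fin n →₀ ℕ) : (u + v).degree = u.degree + v.degree := by
  simp only [Finsupp.degree_eq_weight_one, map_add]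

lemma coeff_zero_of_degree_gt {p : Poly n} {d : Fin n →₀ ℕ}
    (h : p.totalDegree < d.degree) : coeff d p = 0 :=
  coeff_eq_zero_of_totalDegree_lt h

lemma hc_mul_top (p q : Poly n) {dp dq : ℕ} (hp : p.totalDegree ≤ dp)
    (hq : q.totalDegree ≤ dq) :
    homogeneousComponent (dp + dq) (p * q) =
      homogeneousComponent dp p * homogeneousComponent dq q := by
  ext d
  rw [coeff_homogeneousComponent, coeff_mul, coeff_mul]
  by_cases hd : d.degree = dp + dq
  · rw [if_pos hd]
    refine Finset.sum_congr rfl ?_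
    rintro ⟨u, v⟩ huv
    rw [Finset.HasAntidiagonal.mem_antidiagonal] at huv
    dsimp only at huv ⊢
    have hdeg : u.degree + v.degree = dp + dq := by
      rw [← degree_add, huv, hd]
    rw [coeff_homogeneousComponent, coeff_homogeneousComponent]
    by_cases hu : u.degree = dp
    · rw [if_pos hu, if_pos (by omega)]
    · rcases lt_or_gt_of_ne hu with hlt | hgt
      · have hv : dq < v.degree := by omega
        rw [coeff_zero_of_degree_gt (lt_of_le_of_lt hq hv)]
        simp
      · rw [coeff_zero_of_degree_gt (lt_of_le_of_lt hp hgt)]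
        simp
  · rw [if_neg hd]
    symm
    refine Finset.sum_eq_zero ?_
    rintro ⟨u, v⟩ huv
    rw [Finset.HasAntidiagonal.mem_antidiagonal] at huv
    dsimp only at huv ⊢
    have hdeg : u.degree + v.degree = d.degree := by rw [← degree_add, huv]
    rw [coeff_homogeneousComponent, coeff_homogeneousComponent]
    by_cases hu : u.degree = dp
    · rw [if_pos hu, if_neg (show ¬v.degree = dq from by omega)]; ring
    · rw [if_neg hu]; ring

lemma sq_eval_zero {m : ℕ} (q : Fin m → Poly n) (x : Fin n → ℝ)
    (h : eval x (∑ t, q t ^ 2) = 0) (t : Fin m) : eval x (q t) = 0 := by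
  rw [map_sum] at h
  have h' : ∀ i ∈ Finset.univ, (0:ℝ) ≤ eval x (q i ^ 2) := by
    intro i _
    rw [map_pow]
    positivity
  have := (Finset.sum_eq_zero_iff_of_nonneg h').mp h t (Finset.mem_univ t)
  rw [map_pow] at this
  exact pow_eq_zero_iff (by norm_num) |>.mp this

lemma sum_sq_eq_zero {m : ℕ} {q : Fin m → Poly n} (hsum : ∑ t, q t ^ 2 = 0)
    (t : Fin m) : q t = 0 := by
  apply MvPolynomial.funext
  intro x
  rw [map_zero]
  exact sq_eval_zero q x (by rw [hsum, map_zero]) t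

lemma sum_sq_ne_zero {m : ℕ} {q : Fin m → Poly n} {t : Fin m} (ht : q t ≠ 0) :
    ∑ i, q i ^ 2 ≠ 0 := fun h => ht (sum_sq_eq_zero h t)

/-- key degree lemma : in an SOS times g representation with bounded total degree,
each square has bounded degree. -/
lemma sos_mul_degree {m : ℕ} {q : Fin m → Poly n} {gl : Poly n} (hg : gl ≠ 0) {e : ℕ}
    (hdeg : ((∑ t, q t ^ 2) * gl).totalDegree ≤ e) (t : Fin m) :
    q t = 0 ∨ 2 * (q t).totalDegree + gl.totalDegree ≤ e := by
  by_cases hqt : q t = 0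
  · exact Or.inl hqt
  right
  set d : ℕ := Finset.univ.sup (fun i => (q i).totalDegree) with hd
  -- find t₁ with degree d and q t₁ ≠ 0
  obtain ⟨t₁, ht₁ne, ht₁deg⟩ : ∃ t₁, q t₁ ≠ 0 ∧ (q t₁).totalDegree = d := by
    obtain ⟨t₀, _, ht₀⟩ := Finset.exists_mem_eq_sup Finset.univ
      (⟨t, Finset.mem_univ t⟩) (fun i => (q i).totalDegree)
    by_cases h0 : q t₀ = 0
    · have hd0 : d = 0 := by rw [hd, ht₀, h0, totalDegree_zero]
      have h1 : (q t).totalDegree ≤ d :=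
        Finset.le_sup (f := fun i => (q i).totalDegree) (Finset.mem_univ t)
      exact ⟨t, hqt, by omega⟩
    · exact ⟨t₀, h0, ht₀.symm⟩
  have hqle : ∀ i, (q i).totalDegree ≤ d := fun i =>
    Finset.le_sup (f := fun i => (q i).totalDegree) (Finset.mem_univ i)
  have hσle : (∑ i, q i ^ 2).totalDegree ≤ 2 * d := by
    apply totalDegree_finsetSum_le
    intro i _
    calc (q i ^ 2).totalDegree ≤ 2 * (q i).totalDegree := by
          simpa [sq, two_mul] using totalDegree_mul (q i) (q i)
      _ ≤ 2 * d := by have := hqle i; omega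
  -- top component of the sum of squares
  have hctop : homogeneousComponent (2 * d) (∑ i, q i ^ 2) =
      ∑ i, (homogeneousComponent d (q i)) ^ 2 := by
    rw [map_sum]
    refine Finset.sum_congr rfl fun i _ => ?_
    rw [sq, sq, two_mul]
    exact hc_mul_top (q i) (q i) (hqle i) (hqle i)
  have hcne : homogeneousComponent (2 * d) (∑ i, q i ^ 2) ≠ 0 := by
    rw [hctop]
    exact sum_sq_ne_zero (t := t₁) (by
      rw [← ht₁deg]
      exact hc_top_ne_zero ht₁ne)
  have hprod : homogeneousComponent (2 * d + gl.totalDegree) ((∑ i, q i ^ 2) * gl) =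
      homogeneousComponent (2 * d) (∑ i, q i ^ 2) *
        homogeneousComponent gl.totalDegree gl := by
    exact hc_mul_top _ _ hσle le_rfl
  have hne : homogeneousComponent (2 * d + gl.totalDegree) ((∑ i, q i ^ 2) * gl) ≠ 0 := by
    rw [hprod]
    exact mul_ne_zero hcne (hc_top_ne_zero hg)
  have hfin := le_totalDegree_of_hc_ne_zero hne
  have hle := hqle t
  omega

end SosAux

namespace SosAux

noncomputable section

variable {n : ℕ}

/-- exponent vectors bounded coordinatewise by `D` -/
def topIdx (n D : ℕ) : Finset (Fin n →₀ ℕ) :=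
  Finset.Iic (Finsupp.equivFunOnFinite.symm fun _ => D)

lemma mem_topIdx {n D : ℕ} {d : Fin n →₀ ℕ} : d ∈ topIdx n D ↔ ∀ a, d a ≤ D := by
  simp [topIdx, Finset.mem_Iic, Finsupp.le_def]

lemma mem_topIdx_of_support {D : ℕ} {p : Poly n} (hp : p.totalDegree ≤ D)
    {d : Fin n →₀ ℕ} (hd : d ∈ p.support) : d ∈ topIdx n D := by
  rw [mem_topIdx]
  intro a
  calc d a ≤ d.degree := Finsupp.le_degree a d
    _ ≤ p.totalDegree := by
        rw [← degree_sum_eq]; exact le_totalDegree hd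
    _ ≤ D := hp

/-- polynomial from a coefficient vector -/
def pov (D : ℕ) (c : topIdx n D → ℝ) : Poly n :=
  ∑ s : topIdx n D, monomial s.val (c s)

lemma coeff_pov {D : ℕ} (c : topIdx n D → ℝ) (d : topIdx n D) :
    coeff d.val (pov D c) = c d := by
  rw [pov, coeff_sum]
  rw [Fintype.sum_eq_single d]
  · rw [coeff_monomial, if_pos rfl]
  · intro s hs
    rw [coeff_monomial, if_neg (fun he => hs (Subtype.ext he))]

lemma coeff_pov_zero {D : ℕ} (c : topIdx n D → ℝ) {d : Fin n →₀ ℕ}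
    (hd : d ∉ topIdx n D) : coeff d (pov D c) = 0 := by
  rw [pov, coeff_sum]
  apply Finset.sum_eq_zero
  intro s _
  rw [coeff_monomial, if_neg (fun he => hd (by rw [← he]; exact s.prop))]

lemma pov_eq {D : ℕ} {p : Poly n} (hp : p.totalDegree ≤ D) :
    pov D (fun s => coeff s.val p) = p := by
  ext d
  by_cases hd : d ∈ topIdx n D
  · exact coeff_pov (fun s => coeff s.val p) ⟨d, hd⟩
  · rw [coeff_pov_zero _ hd]
    by_contra hne
    exact hd (mem_topIdx_of_support hp (mem_support_iff.mpr fun h => hne h.symm))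

lemma eval_pov {D : ℕ} (x : Fin n → ℝ) (c : topIdx n D → ℝ) :
    eval x (pov D c) = ∑ s : topIdx n D, c s * (s.val.prod fun a e => x a ^ e) := by
  rw [pov, map_sum]
  exact Finset.sum_congr rfl fun s _ => eval_monomial

lemma totalDegree_pov {D : ℕ} (c : topIdx n D → ℝ) :
    (pov D c).totalDegree ≤ n * D := by
  apply totalDegree_finsetSum_le
  intro s _
  refine le_trans (totalDegree_monomial_le _ _) ?_
  have hrfl : ((s.val).sum fun _ => id) = ∑ a ∈ s.val.support, s.val a := rfl
  rw [hrfl]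
  calc ∑ a ∈ s.val.support, s.val a ≤ ∑ a : Fin n, s.val a :=
        Finset.sum_le_sum_of_subset (Finset.subset_univ _)
    _ ≤ ∑ _a : Fin n, D := Finset.sum_le_sum fun a _ => mem_topIdx.mp s.prop a
    _ = n * D := by simp [Finset.sum_const, mul_comm]

end

end SosAux

namespace SosAux

noncomputable section

variable {n : ℕ}

lemma mul_pov {D : ℕ} (c d : topIdx n D → ℝ) :
    pov D c * pov D d =
      ∑ u : topIdx n D, ∑ v : topIdx n D, monomial (u.val + v.val) (c u * d v) := by
  rw [pov, pov, Finset.sum_mul_sum]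
  exact Finset.sum_congr rfl fun u _ => Finset.sum_congr rfl fun v _ => monomial_mul

lemma sum_sq_pov {D : ℕ} {ι : Type*} [Fintype ι] (c : ι → topIdx n D → ℝ) :
    ∑ t : ι, (pov D (c t)) ^ 2 =
      ∑ u : topIdx n D, ∑ v : topIdx n D,
        monomial (u.val + v.val) (∑ t : ι, c t u * c t v) := by
  have h1 : ∀ t, (pov D (c t))^2 =
      ∑ u : topIdx n D, ∑ v : topIdx n D, monomial (u.val+v.val) (c t u * c t v) :=
    fun t => by rw [sq, mul_pov]
  rw [Finset.sum_congr rfl (fun t _ => h1 t), Finset.sum_comm]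
  refine Finset.sum_congr rfl fun u _ => ?_
  rw [Finset.sum_comm]
  refine Finset.sum_congr rfl fun v _ => ?_
  rw [map_sum (monomial (u.val + v.val))]

lemma gram_normalize {D m : ℕ} (c : Fin m → topIdx n D → ℝ) :
    ∃ c' : topIdx n D → topIdx n D → ℝ,
      ∑ t, (pov D (c t)) ^ 2 = ∑ s : topIdx n D, (pov D (c' s)) ^ 2 := by
  classical
  set G : Matrix (topIdx n D) (topIdx n D) ℝ :=
    Matrix.of (fun u v => ∑ t, c t u * c t v) with hG
  have hdot : ∀ x : ↥(topIdx n D) → ℝ,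
      dotProduct x (G.mulVec x) = ∑ t, (∑ u, c t u * x u)^2 := by
    intro x
    simp only [Matrix.mulVec, dotProduct, hG, Matrix.of_apply]
    calc ∑ u, x u * ∑ v, (∑ t, c t u * c t v) * x v
        = ∑ u, ∑ v, ∑ t, (c t u * x u) * (c t v * x v) := by
          refine Finset.sum_congr rfl fun u _ => ?_
          rw [Finset.mul_sum]
          refine Finset.sum_congr rfl fun v _ => ?_
          rw [Finset.sum_mul, Finset.mul_sum]
          exact Finset.sum_congr rfl fun t _ => by ring
      _ = ∑ t, ∑ u, ∑ v, (c t u * x u) * (c t v * x v) := by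
          rw [Finset.sum_congr rfl fun u (_ : u ∈ Finset.univ) => Finset.sum_comm]
          rw [Finset.sum_comm]
      _ = ∑ t, (∑ u, c t u * x u) * (∑ v, c t v * x v) := by
          refine Finset.sum_congr rfl fun t _ => ?_
          rw [Finset.sum_mul_sum]
      _ = ∑ t, (∑ u, c t u * x u)^2 := by
          refine Finset.sum_congr rfl fun t _ => ?_
          rw [sq]
  have hpsd : G.PosSemidef := by
    refine Matrix.PosSemidef.of_dotProduct_mulVec_nonneg ?_ ?_
    · ext u v
      simp only [Matrix.conjTranspose_apply, hG, Matrix.of_apply, star_trivial]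
      exact Finset.sum_congr rfl fun t _ => mul_comm _ _
    · intro x
      have hsx : star x = x := by
        funext u; exact star_trivial _
      rw [hsx, hdot]
      positivity
  obtain ⟨B, hB⟩ : ∃ B : Matrix (topIdx n D) (topIdx n D) ℝ, G = B.conjTranspose * B := by
    open scoped MatrixOrder Matrix.Norms.L2Operator in
    exact CStarAlgebra.nonneg_iff_eq_star_mul_self.mp hpsd.nonneg
  refine ⟨fun s u => B s u, ?_⟩
  rw [sum_sq_pov, sum_sq_pov]
  refine Finset.sum_congr rfl fun u _ => Finset.sum_congr rfl fun v _ => ?_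
  congr 1
  have := congrFun (congrFun hB u) v
  rw [hG] at this
  simp only [Matrix.of_apply] at this
  rw [this, Matrix.mul_apply]
  exact Finset.sum_congr rfl fun s _ => by rw [Matrix.conjTranspose_apply, star_trivial]

end

end SosAux


namespace SosAux

noncomputable section

variable {n : ℕ}

abbrev ES (n D : ℕ) := EuclideanSpace ℝ ↥(topIdx n D)

def VX (D : ℕ) (x : Fin n → ℝ) : ES n D := WithLp.toLp 2 (fun s => (s.val).prod fun a e => x a ^ e)

lemma inner_VX {D : ℕ} (c : ES n D) (x : Fin n → ℝ) :
    (inner ℝ c (VX D x) : ℝ) = eval x (pov D (fun s => c s)) := by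
  rw [eval_pov, PiLp.inner_apply]
  exact Finset.sum_congr rfl fun s _ => by
    simp [VX, RCLike.inner_apply, conj_trivial, mul_comm]

lemma sigma_normalize {e : ℕ} (gl σp : Poly n) (K : Set (Fin n → ℝ))
    (hs : IsSOS σp) (hdeg : (σp * gl).totalDegree ≤ e) :
    ∃ c : ↥(topIdx n ((e - gl.totalDegree)/2)) → ES n ((e - gl.totalDegree)/2),
      (∀ s, c s ∈ Submodule.span ℝ {w : ES n ((e - gl.totalDegree)/2) |
          ∃ x, (x ∈ K ∧ eval x gl ≠ 0) ∧ w = VX _ x}) ∧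
      (∀ x ∈ K,
        (∑ s, (inner ℝ (c s) (VX ((e - gl.totalDegree)/2) x) : ℝ)^2) * eval x gl
          = eval x σp * eval x gl) := by
  classical
  set D := (e - gl.totalDegree)/2 with hD
  obtain ⟨m, q, hq⟩ := hs
  by_cases hgl : gl = 0
  · refine ⟨0, fun s => Submodule.zero_mem _, ?_⟩
    intro x _
    rw [hgl, map_zero]
    ring
  · have hqd : ∀ t, (q t).totalDegree ≤ D := by
      intro t
      rcases sos_mul_degree (q := q) hgl (hq ▸ hdeg) t with h0 | hbd
      · rw [h0, totalDegree_zero]; exact Nat.zero_le _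
      · rw [hD]; omega
    set c₀ : Fin m → ↥(topIdx n D) → ℝ := fun t s => coeff s.val (q t) with hc₀
    have hpovq : ∀ t, pov D (c₀ t) = q t := fun t => pov_eq (hqd t)
    obtain ⟨c₁, hc₁⟩ := gram_normalize c₀
    set c₂ : ↥(topIdx n D) → ES n D := fun s => WithLp.toLp 2 (fun u => c₁ s u) with hc₂
    have hσ : σp = ∑ s : ↥(topIdx n D), (pov D (fun u => c₂ s u))^2 := by
      rw [hq, ← hc₁]
      exact (Finset.sum_congr rfl fun t _ => by rw [hpovq t]).symm
    set W := Submodule.span ℝ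
      {w : ES n D | ∃ x, (x ∈ K ∧ eval x gl ≠ 0) ∧ w = VX D x} with hW
    refine ⟨fun s => (W.orthogonalProjection (c₂ s) : ES n D),
      fun s => Submodule.coe_mem _, ?_⟩
    intro x hx
    by_cases hgx : eval x gl = 0
    · rw [hgx]; ring
    · have hxW : VX D x ∈ W := Submodule.subset_span ⟨x, ⟨hx, hgx⟩, rfl⟩
      have hinner : ∀ s : ↥(topIdx n D),
          (inner ℝ ((W.orthogonalProjection (c₂ s) : ES n D)) (VX D x) : ℝ)
            = inner ℝ (c₂ s) (VX D x) := by
        intro s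
        have horto : (inner ℝ ((c₂ s) -
            (W.orthogonalProjection (c₂ s) : ES n D)) (VX D x) : ℝ) = 0 :=
          by exact Submodule.starProjection_inner_eq_zero (c₂ s) (VX D x) hxW
        rw [inner_sub_left] at horto
        linarith
      congr 1
      rw [Finset.sum_congr rfl fun s (_ : s ∈ Finset.univ) => by rw [hinner s]]
      rw [hσ, map_sum]
      refine Finset.sum_congr rfl fun s _ => ?_
      rw [map_pow, ← inner_VX]

end

end SosAux

namespace SosAux

noncomputable section

lemma coercive_bound {ι κ : Type*} [Fintype ι] [Fintype κ]
    (v : κ → EuclideanSpace ℝ ι) (w : κ → ℝ) (hw : ∀ i, 0 < w i) :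
    ∃ ε > 0, ∀ c ∈ Submodule.span ℝ (Set.range v),
      ε * ‖c‖^2 ≤ ∑ i, w i * (inner ℝ c (v i) : ℝ)^2 := by
  classical
  set W := Submodule.span ℝ (Set.range v) with hW
  set L : W →ₗ[ℝ] EuclideanSpace ℝ κ :=
    { toFun := fun c => WithLp.toLp 2 fun i =>
        Real.sqrt (w i) * (inner ℝ (c : EuclideanSpace ℝ ι) (v i) : ℝ)
      map_add' := by
        intro a b
        ext i
        show Real.sqrt (w i) *
          (inner ℝ ((a : EuclideanSpace ℝ ι) + (b : EuclideanSpace ℝ ι)) (v i) : ℝ) = _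
        rw [inner_add_left]
        show _ = Real.sqrt (w i) * (inner ℝ (a : EuclideanSpace ℝ ι) (v i) : ℝ)
          + Real.sqrt (w i) * (inner ℝ (b : EuclideanSpace ℝ ι) (v i) : ℝ)
        ring
      map_smul' := by
        intro r a
        ext i
        show Real.sqrt (w i) *
          (inner ℝ (r • (a : EuclideanSpace ℝ ι)) (v i) : ℝ) = _
        rw [real_inner_smul_left]
        show _ = r * (Real.sqrt (w i) * (inner ℝ (a : EuclideanSpace ℝ ι) (v i) : ℝ))
        ring } with hL
  have hLapp : ∀ (c : W) (i : κ),
      L c i = Real.sqrt (w i) * (inner ℝ (c : EuclideanSpace ℝ ι) (v i) : ℝ) :=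
    fun c i => rfl
  have hker : LinearMap.ker L = ⊥ := by
    rw [LinearMap.ker_eq_bot']
    intro c hc
    have hinner : ∀ i, (inner ℝ (c : EuclideanSpace ℝ ι) (v i) : ℝ) = 0 := by
      intro i
      have h0 : L c i = 0 := by rw [hc]; rfl
      rw [hLapp] at h0
      have hsqrt : Real.sqrt (w i) ≠ 0 :=
        ne_of_gt (Real.sqrt_pos.mpr (hw i))
      exact (mul_eq_zero.mp h0).resolve_left hsqrt
    have hcW : ∀ u ∈ W, (inner ℝ u (c : EuclideanSpace ℝ ι) : ℝ) = 0 := by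
      intro u hu
      rw [hW] at hu
      induction hu using Submodule.span_induction with
      | mem x hx =>
          obtain ⟨i, rfl⟩ := hx
          rw [real_inner_comm]
          exact hinner i
      | zero => simp
      | add x y _ _ hx hy => rw [inner_add_left, hx, hy]; ring
      | smul r x _ hx => rw [real_inner_smul_left, hx]; ring
    have hself : (inner ℝ (c : EuclideanSpace ℝ ι) (c : EuclideanSpace ℝ ι) : ℝ) = 0 :=
      hcW _ c.prop
    exact Subtype.ext (inner_self_eq_zero.mp hself)
  obtain ⟨Kc, hKpos, hanti⟩ := L.exists_antilipschitzWith hker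
  refine ⟨((Kc : ℝ)^2)⁻¹, by positivity, ?_⟩
  intro c hc
  set cw : W := ⟨c, hc⟩ with hcw
  have hnorm : ‖c‖ ≤ (Kc : ℝ) * ‖L cw‖ := by
    have := hanti.le_mul_dist cw 0
    rw [map_zero, dist_zero_right, dist_zero_right] at this
    exact this
  have hnsq : ‖c‖^2 ≤ (Kc : ℝ)^2 * ‖L cw‖^2 := by
    rw [← mul_pow]
    exact pow_le_pow_left₀ (norm_nonneg _) hnorm 2
  have hLnorm : ‖L cw‖^2 = ∑ i, w i * (inner ℝ c (v i) : ℝ)^2 := by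
    rw [← real_inner_self_eq_norm_sq, PiLp.inner_apply]
    refine Finset.sum_congr rfl fun i _ => ?_
    rw [RCLike.inner_apply, conj_trivial, hLapp]
    have hws : Real.sqrt (w i) * Real.sqrt (w i) = w i :=
      Real.mul_self_sqrt (le_of_lt (hw i))
    calc (Real.sqrt (w i) * (inner ℝ c (v i) : ℝ)) *
          (Real.sqrt (w i) * (inner ℝ c (v i) : ℝ))
        = (Real.sqrt (w i) * Real.sqrt (w i)) * (inner ℝ c (v i) : ℝ)^2 := by ring
      _ = w i * (inner ℝ c (v i) : ℝ)^2 := by rw [hws]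
  rw [← hLnorm]
  rw [inv_mul_le_iff₀ (by positivity)]
  linarith [hnsq]

end

end SosAux

namespace SosAux

noncomputable section

variable {n : ℕ}

lemma isSOS_sum_sq {ι : Type*} [Fintype ι] (p : ι → Poly n) :
    IsSOS (∑ i, p i ^ 2) := by
  refine ⟨Fintype.card ι, fun t => p ((Fintype.equivFin ι).symm t), ?_⟩
  rw [Equiv.sum_comp (Fintype.equivFin ι).symm (fun i => p i ^ 2)]

lemma eval_sum_sq_nonneg {ι : Type*} [Fintype ι] (p : ι → Poly n) (x : Fin n → ℝ) :
    0 ≤ eval x (∑ i, p i ^ 2) := by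
  rw [map_sum]
  refine Finset.sum_nonneg fun i _ => ?_
  rw [map_pow]
  positivity

end

end SosAux

open SosAux in
theorem sos_relaxation_achieves_optimum
    {n m₁ m₂ : ℕ} (f : MvPolynomial (Fin n) ℝ)
    (h : Fin m₁ → MvPolynomial (Fin n) ℝ) (g : Fin m₂ → MvPolynomial (Fin n) ℝ)
    (fm : ℝ) (hfm : IsGLB ((fun x => eval x f) '' feasSet h g) fm)
    (hconv : ∃ N₀ : ℕ, ∀ k ≥ N₀, lasserreBound f h g k = (fm : EReal))
    (hI : (Ideal.span (Set.range h) : Set (MvPolynomial (Fin n) ℝ)) =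
      vanishIdeal (feasSet h g)) :
    ∃ N : ℕ, ∀ k ≥ N, f - C fm ∈ truncIdeal h k + truncQM g k := by
  classical
  obtain ⟨N₀, hN₀⟩ := hconv
  set K := feasSet h g with hKdef
  set g' : Fin (m₂+1) → MvPolynomial (Fin n) ℝ := Fin.cons 1 g with hg'
  have hg'nonneg : ∀ x ∈ K, ∀ ℓ, (0:ℝ) ≤ eval x (g' ℓ) := by
    intro x hx ℓ
    refine Fin.cases ?_ ?_ ℓ
    · simp [hg']
    · intro i
      simpa [hg'] using hx.2 i
  have hvanish : ∀ p ∈ truncIdeal h N₀, ∀ x ∈ K, eval x p = 0 := by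
    intro p hp x hx
    obtain ⟨φ, -, rfl⟩ := hp
    have hmem : (∑ i, φ i * h i) ∈ Ideal.span (Set.range h) :=
      Ideal.sum_mem _ fun i _ => Ideal.mul_mem_left _ _ (Ideal.subset_span ⟨i, rfl⟩)
    have hmem' : (∑ i, φ i * h i) ∈ vanishIdeal (feasSet h g) := by
      rw [← hI]
      exact hmem
    exact hmem' x hx
  -- Step 1 : a sequence of near-optimal representations at level N₀
  have step1 : ∀ j : ℕ, ∃ r : ℝ, (fm - 1/((j:ℝ)+1) < r ∧ r ≤ fm) ∧
      f - C r ∈ truncIdeal h N₀ + truncQM g N₀ := by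
    intro j
    have hlas := hN₀ N₀ le_rfl
    simp only [lasserreBound] at hlas
    have hlt : ((fm - 1/((j:ℝ)+1) : ℝ) : EReal) <
        sSup {γ : EReal | ∃ r : ℝ, γ = (r : EReal) ∧
          f - C r ∈ truncIdeal h N₀ + truncQM g N₀} := by
      rw [hlas]
      have : fm - 1/((j:ℝ)+1) < fm := by
        have : (0:ℝ) < 1/((j:ℝ)+1) := by positivity
        linarith
      exact_mod_cast this
    obtain ⟨γ, hγmem, hγlt⟩ := lt_sSup_iff.mp hlt
    obtain ⟨r, rfl, hrmem⟩ := hγmem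
    refine ⟨r, ⟨by exact_mod_cast hγlt, ?_⟩, hrmem⟩
    have hle : (r : EReal) ≤ sSup {γ : EReal | ∃ r : ℝ, γ = (r : EReal) ∧
        f - C r ∈ truncIdeal h N₀ + truncQM g N₀} := le_sSup ⟨r, rfl, hrmem⟩
    rw [hlas] at hle
    exact_mod_cast hle
  choose r hrb hrmem using step1
  have hrtend : Filter.Tendsto r Filter.atTop (nhds fm) := by
    have h1 : Filter.Tendsto (fun j : ℕ => fm - 1/((j:ℝ)+1)) Filter.atTop (nhds fm) := by
      have := tendsto_one_div_add_atTop_nhds_zero_nat (𝕜 := ℝ)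
      have h2 := Filter.Tendsto.sub (tendsto_const_nhds (x := fm)) this
      simpa using h2
    exact tendsto_of_tendsto_of_tendsto_of_le_of_le h1 tendsto_const_nhds
      (fun j => le_of_lt (hrb j).1) (fun j => (hrb j).2)
  -- Step 2 : unpack representations
  have step2 : ∀ j, ∃ A ∈ truncIdeal h N₀,
      ∃ σ : Fin (m₂+1) → MvPolynomial (Fin n) ℝ,
      (∀ ℓ, IsSOS (σ ℓ) ∧ (σ ℓ * g' ℓ).totalDegree ≤ 2*N₀) ∧
      f - C (r j) = A + ∑ ℓ, σ ℓ * g' ℓ := by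
    intro j
    obtain ⟨A, hA, B, hB, hAB⟩ := Set.mem_add.mp (hrmem j)
    obtain ⟨σ, hσ, rfl⟩ := hB
    rw [← hg'] at hAB
    exact ⟨A, hA, σ, hσ, hAB.symm⟩
  choose A hA σs hσs hfeq using step2
  -- degree bounds
  set D : Fin (m₂+1) → ℕ := fun ℓ => (2*N₀ - (g' ℓ).totalDegree)/2 with hD
  -- Step 3 : normalized vector representations of the sigmas
  have step3 : ∀ j, ∀ ℓ, ∃ c : ↥(topIdx n (D ℓ)) → ES n (D ℓ),
      (∀ s, c s ∈ Submodule.span ℝ {w : ES n (D ℓ) |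
        ∃ x, (x ∈ K ∧ eval x (g' ℓ) ≠ 0) ∧ w = VX (D ℓ) x}) ∧
      (∀ x ∈ K, (∑ s, (inner ℝ (c s) (VX (D ℓ) x) : ℝ)^2) * eval x (g' ℓ)
          = eval x (σs j ℓ) * eval x (g' ℓ)) :=
    fun j ℓ => sigma_normalize (g' ℓ) (σs j ℓ) K (hσs j ℓ).1 (hσs j ℓ).2
  choose cc hccW hccEval using step3
  -- evaluation identity on K
  have evalK : ∀ j, ∀ x ∈ K, eval x f - r j
      = ∑ ℓ, (∑ s, (inner ℝ (cc j ℓ s) (VX (D ℓ) x) : ℝ)^2) * eval x (g' ℓ) := by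
    intro j x hx
    have h1 := congrArg (eval x) (hfeq j)
    rw [map_sub, map_add, map_sum, eval_C, hvanish _ (hA j) x hx, zero_add] at h1
    rw [h1]
    refine Finset.sum_congr rfl fun ℓ _ => ?_
    rw [map_mul]
    exact (hccEval j ℓ x hx).symm
  have termNonneg : ∀ j ℓ, ∀ x ∈ K,
      (0:ℝ) ≤ (∑ s, (inner ℝ (cc j ℓ s) (VX (D ℓ) x) : ℝ)^2) * eval x (g' ℓ) := by
    intro j ℓ x hx
    apply mul_nonneg
    · exact Finset.sum_nonneg fun s _ => sq_nonneg _
    · exact hg'nonneg x hx ℓ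
  have termLe : ∀ j ℓ, ∀ x ∈ K,
      (∑ s, (inner ℝ (cc j ℓ s) (VX (D ℓ) x) : ℝ)^2) * eval x (g' ℓ)
        ≤ eval x f - fm + 1 := by
    intro j ℓ x hx
    have hone : (1:ℝ)/((j:ℝ)+1) ≤ 1 := by
      rw [div_le_one (by positivity)]
      have : (0:ℝ) ≤ (j:ℝ) := Nat.cast_nonneg j
      linarith
    calc (∑ s, (inner ℝ (cc j ℓ s) (VX (D ℓ) x) : ℝ)^2) * eval x (g' ℓ)
        ≤ ∑ ℓ', (∑ s, (inner ℝ (cc j ℓ' s) (VX (D ℓ') x) : ℝ)^2) * eval x (g' ℓ') :=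
          Finset.single_le_sum (fun ℓ' _ => termNonneg j ℓ' x hx) (Finset.mem_univ ℓ)
      _ = eval x f - r j := (evalK j x hx).symm
      _ ≤ eval x f - fm + 1 := by
          have := (hrb j).1
          linarith
  -- Step 4 : uniform bound on the vectors
  have step4 : ∀ ℓ, ∃ Bd : ℝ, ∀ j s, ‖cc j ℓ s‖^2 ≤ Bd := by
    intro ℓ
    obtain ⟨b, hbS, hbspan, hbind⟩ := exists_linearIndependent ℝ
      {w : ES n (D ℓ) | ∃ x, (x ∈ K ∧ eval x (g' ℓ) ≠ 0) ∧ w = VX (D ℓ) x}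
    have hbfin : b.Finite := hbind.setFinite
    haveI := hbfin.fintype
    have hpt : ∀ y : b, ∃ x, (x ∈ K ∧ eval x (g' ℓ) ≠ 0) ∧ (y : ES n (D ℓ)) = VX (D ℓ) x :=
      fun y => hbS y.prop
    choose pt hptKg hptVX using hpt
    obtain ⟨ε, hε, hbound⟩ := coercive_bound (fun y : b => (y : ES n (D ℓ)))
      (fun y => eval (pt y) (g' ℓ))
      (fun y => lt_of_le_of_ne (hg'nonneg _ (hptKg y).1 ℓ) (Ne.symm (hptKg y).2))
    refine ⟨(∑ y : b, (eval (pt y) f - fm + 1)) / ε, ?_⟩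
    intro j s
    have hcb : cc j ℓ s ∈ Submodule.span ℝ
        (Set.range (fun y : b => (y : ES n (D ℓ)))) := by
      rw [Subtype.range_coe, hbspan]
      exact hccW j ℓ s
    have h1 := hbound _ hcb
    have h2 : ∑ y : b, eval (pt y) (g' ℓ) *
        (inner ℝ (cc j ℓ s) ((y : ES n (D ℓ))) : ℝ)^2
        ≤ ∑ y : b, (eval (pt y) f - fm + 1) := by
      refine Finset.sum_le_sum fun y _ => ?_
      rw [hptVX y]
      calc eval (pt y) (g' ℓ) * (inner ℝ (cc j ℓ s) (VX (D ℓ) (pt y)) : ℝ)^2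
          ≤ eval (pt y) (g' ℓ) *
            ∑ s', (inner ℝ (cc j ℓ s') (VX (D ℓ) (pt y)) : ℝ)^2 := by
            apply mul_le_mul_of_nonneg_left _ (hg'nonneg _ (hptKg y).1 ℓ)
            exact Finset.single_le_sum
              (f := fun s' => (inner ℝ (cc j ℓ s') (VX (D ℓ) (pt y)) : ℝ)^2)
              (fun s' _ => sq_nonneg _) (Finset.mem_univ s)
        _ = (∑ s', (inner ℝ (cc j ℓ s') (VX (D ℓ) (pt y)) : ℝ)^2) *
              eval (pt y) (g' ℓ) := mul_comm _ _
        _ ≤ eval (pt y) f - fm + 1 := termLe j ℓ (pt y) (hptKg y).1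
    rw [le_div_iff₀ hε]
    calc ‖cc j ℓ s‖^2 * ε = ε * ‖cc j ℓ s‖^2 := mul_comm _ _
      _ ≤ ∑ y : b, eval (pt y) (g' ℓ) * (inner ℝ (cc j ℓ s) ((y : ES n (D ℓ))) : ℝ)^2 := h1
      _ ≤ ∑ y : b, (eval (pt y) f - fm + 1) := h2
  choose Bd hBd using step4
  set R : ℝ := ∑ ℓ, max (Bd ℓ) 0 with hR
  have hRnonneg : 0 ≤ R := Finset.sum_nonneg fun ℓ _ => le_max_right _ _
  have hccR : ∀ j ℓ s, ‖cc j ℓ s‖ ≤ Real.sqrt R := by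
    intro j ℓ s
    apply Real.le_sqrt_of_sq_le
    calc ‖cc j ℓ s‖^2 ≤ Bd ℓ := hBd ℓ j s
      _ ≤ max (Bd ℓ) 0 := le_max_left _ _
      _ ≤ R := Finset.single_le_sum
          (f := fun ℓ => max (Bd ℓ) 0) (fun ℓ' _ => le_max_right _ _) (Finset.mem_univ ℓ)
  -- Step 5 : extract a convergent subsequence
  have step5 : ∃ (cst : ∀ ℓ, ↥(topIdx n (D ℓ)) → ES n (D ℓ)) (φ : ℕ → ℕ),
      StrictMono φ ∧ ∀ ℓ s, Filter.Tendsto (fun j => cc (φ j) ℓ s)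
        Filter.atTop (nhds (cst ℓ s)) := by
    set seq : ℕ → ∀ ℓ, (↥(topIdx n (D ℓ)) → ES n (D ℓ)) := fun j ℓ s => cc j ℓ s with hseq
    have hb : ∀ j, seq j ∈ Metric.closedBall
        (0 : ∀ ℓ, (↥(topIdx n (D ℓ)) → ES n (D ℓ))) (Real.sqrt R) := by
      intro j
      rw [Metric.mem_closedBall, dist_zero_right]
      rw [pi_norm_le_iff_of_nonneg (Real.sqrt_nonneg R)]
      intro ℓ
      rw [pi_norm_le_iff_of_nonneg (Real.sqrt_nonneg R)]
      intro s
      exact hccR j ℓ s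
    obtain ⟨cst, -, φ, hφ, hconv'⟩ :=
      tendsto_subseq_of_bounded Metric.isBounded_closedBall hb
    refine ⟨cst, φ, hφ, fun ℓ s => ?_⟩
    have h1 : Filter.Tendsto (fun j => (seq (φ j)) ℓ) Filter.atTop (nhds (cst ℓ)) :=
      (tendsto_pi_nhds.mp hconv') ℓ
    exact (tendsto_pi_nhds.mp h1) s
  obtain ⟨cst, φ, hφmono, htend⟩ := step5
  have hrφ : Filter.Tendsto (fun j => r (φ j)) Filter.atTop (nhds fm) :=
    hrtend.comp hφmono.tendsto_atTop
  -- the limit sigmas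
  set σstar : Fin (m₂+1) → MvPolynomial (Fin n) ℝ :=
    fun ℓ => ∑ s, (pov (D ℓ) (fun u => cst ℓ s u))^2 with hσstar
  have hσstarEval : ∀ ℓ x, eval x (σstar ℓ)
      = ∑ s, (inner ℝ (cst ℓ s) (VX (D ℓ) x) : ℝ)^2 := by
    intro ℓ x
    rw [hσstar, map_sum]
    refine Finset.sum_congr rfl fun s _ => ?_
    rw [map_pow, ← inner_VX]
  set z : MvPolynomial (Fin n) ℝ := f - C fm - ∑ ℓ, σstar ℓ * g' ℓ with hz
  have hzvan : ∀ x ∈ K, eval x z = 0 := by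
    intro x hx
    have hF : ∀ j, eval x f - r (φ j) - ∑ ℓ, (∑ s,
        (inner ℝ (cc (φ j) ℓ s) (VX (D ℓ) x) : ℝ)^2) * eval x (g' ℓ) = 0 := by
      intro j
      rw [evalK (φ j) x hx]
      ring
    have htt : Filter.Tendsto (fun j => eval x f - r (φ j) - ∑ ℓ, (∑ s,
        (inner ℝ (cc (φ j) ℓ s) (VX (D ℓ) x) : ℝ)^2) * eval x (g' ℓ)) Filter.atTop
        (nhds (eval x f - fm - ∑ ℓ, (∑ s,
          (inner ℝ (cst ℓ s) (VX (D ℓ) x) : ℝ)^2) * eval x (g' ℓ))) := by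
      apply Filter.Tendsto.sub
      · exact Filter.Tendsto.sub tendsto_const_nhds hrφ
      · apply tendsto_finset_sum
        intro ℓ _
        apply Filter.Tendsto.mul_const
        apply tendsto_finset_sum
        intro s _
        exact (Filter.Tendsto.inner (htend ℓ s) tendsto_const_nhds).pow 2
    have h0 : eval x f - fm - ∑ ℓ, (∑ s,
        (inner ℝ (cst ℓ s) (VX (D ℓ) x) : ℝ)^2) * eval x (g' ℓ) = 0 := by
      have htt0 : Filter.Tendsto (fun _ : ℕ => (0:ℝ)) Filter.atTop
          (nhds (eval x f - fm - ∑ ℓ, (∑ s,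
            (inner ℝ (cst ℓ s) (VX (D ℓ) x) : ℝ)^2) * eval x (g' ℓ))) := by
        refine htt.congr fun j => hF j
      exact (tendsto_nhds_unique htt0 tendsto_const_nhds)
    rw [hz, map_sub, map_sub, map_sum, eval_C]
    rw [Finset.sum_congr rfl fun ℓ (_ : ℓ ∈ Finset.univ) => by
      rw [map_mul, hσstarEval ℓ x]]
    exact h0
  -- z lies in the ideal
  have hzspan : z ∈ Ideal.span (Set.range h) := by
    have hzmem : z ∈ vanishIdeal (feasSet h g) := fun x hx => hzvan x hx
    have : z ∈ (Ideal.span (Set.range h) : Set (MvPolynomial (Fin n) ℝ)) := by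
      rw [hI]
      exact hzmem
    exact this
  obtain ⟨ψ, hψ⟩ := (Submodule.mem_span_range_iff_exists_fun _).mp hzspan
  have hψ' : z = ∑ i, ψ i * h i := by
    rw [← hψ]
    exact Finset.sum_congr rfl fun i _ => (smul_eq_mul ..).symm
  -- choose N
  set dI : ℕ := Finset.univ.sup (fun i => (ψ i * h i).totalDegree) with hdI
  set dQ : ℕ := Finset.univ.sup (fun ℓ => (σstar ℓ * g' ℓ).totalDegree) with hdQ
  refine ⟨dI + dQ, fun k hk => ?_⟩
  rw [Set.mem_add]
  refine ⟨z, ⟨ψ, fun i => ?_, hψ'⟩, ∑ ℓ, σstar ℓ * g' ℓ, ⟨σstar, fun ℓ => ⟨?_, ?_⟩, by rw [hg']⟩,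
    by rw [hz]; ring⟩
  · have : (ψ i * h i).totalDegree ≤ dI :=
      Finset.le_sup (f := fun i => (ψ i * h i).totalDegree) (Finset.mem_univ i)
    omega
  · exact isSOS_sum_sq _
  · have : (σstar ℓ * g' ℓ).totalDegree ≤ dQ :=
      Finset.le_sup (f := fun ℓ => (σstar ℓ * g' ℓ).totalDegree) (Finset.mem_univ ℓ)
    rw [← hg']
    omega
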